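/- With the notation below, Z′∘Z − q²·Z∘Z′ = (q² − 1)·id_W as linear maps on W. -/
import Mathlib


/-- `lam q n = λ_n = (1 - q^(2n))^(1/2)`, so `lam q 0 = 0`. -/
noncomputable def lam (q : ℝ) (n : ℕ) : ℝ := Real.sqrt (1 - q ^ (2 * n))

lemma lam_sq (q : ℝ) (hq0 : 0 < q) (hq1 : q < 1) (n : ℕ) :
    lam q n * lam q n = 1 - q ^ (2 * n) := by
  apply Real.mul_self_sqrt
  have := pow_le_one₀ hq0.le hq1.le (n := 2 * n)
  linarith

lemma key (q : ℝ) (hq0 : 0 < q) (hq1 : q < 1) (m : ℕ) :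
    (q ^ (m + 1))⁻¹ * lam q (m + 1) * ((q ^ (m + 1))⁻¹ * lam q (m + 1)) -
      q ^ 2 * ((q ^ (m + 2))⁻¹ * lam q (m + 2) * ((q ^ (m + 2))⁻¹ * lam q (m + 2))) =
      q ^ 2 - 1 := by
  have hq : q ≠ 0 := ne_of_gt hq0
  have h1 := lam_sq q hq0 hq1 (m + 1)
  have h2 := lam_sq q hq0 hq1 (m + 2)
  have e1 : (q ^ (m + 1))⁻¹ * lam q (m + 1) * ((q ^ (m + 1))⁻¹ * lam q (m + 1))
      = (1 - q ^ (2 * (m + 1))) / q ^ (2 * (m + 1)) := by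
    field_simp
    rw [← h1]; ring
  have e2 : (q ^ (m + 2))⁻¹ * lam q (m + 2) * ((q ^ (m + 2))⁻¹ * lam q (m + 2))
      = (1 - q ^ (2 * (m + 2))) / q ^ (2 * (m + 2)) := by
    field_simp
    rw [← h2]; ring
  rw [e1, e2]
  have hp1 : (q : ℝ) ^ (2 * (m + 1)) ≠ 0 := pow_ne_zero _ hq
  have hp2 : (q : ℝ) ^ (2 * (m + 2)) ≠ 0 := pow_ne_zero _ hq
  field_simp
  ring

/-- Remark 2 of the paper: the operators `Z, Z′` modelling `π(z), π(z*)` for `z = ac⁻¹`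
satisfy the relation `z*z − q²zz* = q² − 1`. -/
theorem z_relation (q : ℝ) (hq0 : 0 < q) (hq1 : q < 1)
    (V : Type*) [AddCommGroup V] [Module ℂ V]
    (w : V ≃ₗ[ℂ] V)
    (Z Z' : (ℕ →₀ V) →ₗ[ℂ] (ℕ →₀ V))
    (hZ : ∀ (η : V) (n : ℕ),
      Z (Finsupp.single n η)
        = (((q ^ n)⁻¹ * lam q n : ℝ) : ℂ) • Finsupp.single (n - 1) (w.symm η))
    (hZ' : ∀ (η : V) (n : ℕ),
      Z' (Finsupp.single n η)
        = (((q ^ (n + 1))⁻¹ * lam q (n + 1) : ℝ) : ℂ) • Finsupp.single (n + 1) (w η)) :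
    Z' ∘ₗ Z - ((q ^ 2 : ℝ) : ℂ) • (Z ∘ₗ Z')
      = ((q ^ 2 - 1 : ℝ) : ℂ) • (LinearMap.id : (ℕ →₀ V) →ₗ[ℂ] (ℕ →₀ V)) := by
  have hq : q ≠ 0 := ne_of_gt hq0
  apply Finsupp.lhom_ext
  intro n η
  simp only [LinearMap.sub_apply, LinearMap.comp_apply, LinearMap.smul_apply,
    LinearMap.id_apply, hZ, hZ', map_smul]
  cases n with
  | zero =>
    have hlam0 : lam q 0 = 0 := by simp [lam]
    simp only [hZ, hZ', hlam0, map_smul, Nat.zero_sub, pow_zero, Nat.add_sub_cancel,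
      LinearEquiv.symm_apply_apply, mul_zero, Complex.ofReal_zero, zero_smul, smul_zero,
      sub_zero, zero_sub, smul_smul]
    rw [zero_mul, zero_smul, zero_sub, ← neg_smul]
    congr 1
    have h1 := lam_sq q hq0 hq1 1
    rw [show (2 : ℕ) * 1 = 2 from rfl] at h1
    have : ((q ^ (0 + 1) : ℝ)⁻¹ * lam q (0 + 1) * ((q ^ (0 + 1))⁻¹ * lam q (0 + 1))) * q ^ 2
        = 1 - q ^ 2 := by
      field_simp
      rw [← h1]; ring
    push_cast [← Complex.ofReal_mul, ← Complex.ofReal_pow, ← Complex.ofReal_sub]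
    norm_cast
    nlinarith [this]
  | succ m =>
    simp only [hZ, hZ', Nat.add_sub_cancel, map_smul, LinearEquiv.apply_symm_apply,
      LinearEquiv.symm_apply_apply, smul_smul]
    rw [← sub_smul]
    congr 1
    exact_mod_cast key q hq0 hq1 m
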